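/- Let S be the unilateral shift on ℓ²(ℕ) with canonical orthonormal basis (e_n)_{n≥1}. Let λ = (λ_n)_{n≥1} be a bounded complex sequence with λ_i ≠ λ_j whenever i ≠ j, and let w = (w_n)_{n≥1} be a square-summable complex sequence with w_n ≠ 0 for every n. Let T be the bounded operator on ℓ²(ℕ) defined by T x = (∑_{n≥1} w_n x_n) e₁ + ∑_{n≥1} λ_n x_n e_{n+1} for x = (x_n), i.e., T = S D_λ + θ_{e₁, w̄} is the perturbation of the weighted shift S D_λ by the rank-one operator θ_{e₁, w̄}. Then the Kronecker representation with f_α = S and f_β = T on H₁ = H₂ = ℓ²(ℕ) is transitive: whenever φ and ψ are bounded operators on ℓ²(ℕ) with S φ = ψ S and T φ = ψ T, there is a scalar α ∈ ℂ with φ = ψ = α I. -/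

import Mathlib

open ENNReal

noncomputable section StmtAux

private lemma stmt11_fact : Fact ((1:ℝ≥0∞) ≤ 2) := ⟨one_le_two⟩

attribute [local instance] stmt11_fact

/-- The coordinate evaluation as a continuous linear functional on `ℓ²`. -/
private def stmt11_eval (m : ℕ) : lp (fun _ : ℕ => ℂ) 2 →L[ℂ] ℂ :=
  LinearMap.mkContinuous
    { toFun := fun x => x m
      map_add' := fun x y => rfl
      map_smul' := fun c x => rfl } 1
    (fun x => by
      rw [one_mul]; exact lp.norm_apply_le_norm (by norm_num : (2:ℝ≥0∞) ≠ 0) x m)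

@[simp] private lemma stmt11_eval_apply (m : ℕ) (x : lp (fun _ : ℕ => ℂ) 2) :
    stmt11_eval m x = x m := rfl

private lemma stmt11_dense :
    Dense ((Submodule.span ℂ (Set.range fun n : ℕ => lp.single 2 n (1:ℂ)) :
      Submodule ℂ (lp (fun _ : ℕ => ℂ) 2)) : Set (lp (fun _ : ℕ => ℂ) 2)) := by
  intro x
  have hsum : HasSum (fun i : ℕ => lp.single 2 i (x i : ℂ)) x :=
    lp.hasSum_single (by norm_num) x
  refine mem_closure_of_tendsto hsum (Filter.Eventually.of_forall fun s => ?_)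
  refine Submodule.sum_mem _ fun i _ => ?_
  have h1 := lp.single_smul (E := fun _ : ℕ => ℂ) (𝕜 := ℂ) 2 i (x i) (1:ℂ)
  rw [smul_eq_mul, mul_one] at h1
  rw [h1]
  exact Submodule.smul_mem _ _ (Submodule.subset_span ⟨i, rfl⟩)

private lemma stmt11_ext {F : Type*} [NormedAddCommGroup F] [NormedSpace ℂ F]
    {A B : lp (fun _ : ℕ => ℂ) 2 →L[ℂ] F}
    (h : ∀ n, A (lp.single 2 n (1:ℂ)) = B (lp.single 2 n (1:ℂ))) : A = B := by
  refine ContinuousLinearMap.ext_on stmt11_dense ?_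
  rintro x ⟨n, rfl⟩
  exact h n

end StmtAux


/-- **A rank-one perturbation of a weighted shift gives a transitive Kronecker
representation.**
On `ℓ²(ℕ)` with canonical basis `(e_n)` (here `e n = lp.single 2 n 1`, `n = 0,1,2,…`,
playing the role of `e_{n+1}`), let `S` be the unilateral shift (`S e_n = e_{n+1}`).
Let `λ = (λ_n)` be a bounded sequence with pairwise distinct entries and `w = (w_n)` a
square-summable sequence with all `w_n ≠ 0`.  Let `T = S D_λ + θ_{e₁, w̄}` be the bounded
operator determined by `T e_n = w_n e₁ + λ_n e_{n+1}`.  Then the Kronecker representation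
`(f_α, f_β) = (S, T)` is transitive: if `S φ = ψ S` and `T φ = ψ T` for bounded operators
`φ, ψ`, then `φ = ψ = α I` for some scalar `α ∈ ℂ`. -/
theorem stmt_11
    (S : lp (fun _ : ℕ => ℂ) 2 →L[ℂ] lp (fun _ : ℕ => ℂ) 2)
    (hS : ∀ n : ℕ, S (lp.single 2 n (1 : ℂ)) = lp.single 2 (n + 1) (1 : ℂ))
    (lam : ℕ → ℂ) (hbdd : ∃ C : ℝ, ∀ n, ‖lam n‖ ≤ C)
    (hdist : ∀ i j : ℕ, i ≠ j → lam i ≠ lam j)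
    (w : ℕ → ℂ) (hw : Memℓp w 2) (hwn : ∀ n, w n ≠ 0)
    (T : lp (fun _ : ℕ => ℂ) 2 →L[ℂ] lp (fun _ : ℕ => ℂ) 2)
    (hT : ∀ n : ℕ, T (lp.single 2 n (1 : ℂ)) =
      w n • lp.single 2 0 (1 : ℂ) + lam n • lp.single 2 (n + 1) (1 : ℂ)) :
    ∀ φ ψ : lp (fun _ : ℕ => ℂ) 2 →L[ℂ] lp (fun _ : ℕ => ℂ) 2,
      S ∘L φ = ψ ∘L S → T ∘L φ = ψ ∘L T →
      ∃ a : ℂ, φ = a • (1 : lp (fun _ : ℕ => ℂ) 2 →L[ℂ] lp (fun _ : ℕ => ℂ) 2) ∧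
        ψ = a • (1 : lp (fun _ : ℕ => ℂ) 2 →L[ℂ] lp (fun _ : ℕ => ℂ) 2) := by
  intro φ ψ hSc hTc
  set e : ℕ → lp (fun _ : ℕ => ℂ) 2 := fun n => lp.single 2 n (1:ℂ) with he
  have hcoord : ∀ n m : ℕ, (e n : ℕ → ℂ) m = if m = n then 1 else 0 := by
    intro n m
    by_cases h : m = n
    · subst h; simp [he, lp.single_apply_self]
    · simp [he, lp.single_apply_ne 2 n _ h, h]
  -- `S` kills the 0-th coordinate
  have hS0 : ∀ x : lp (fun _ : ℕ => ℂ) 2, (S x : ℕ → ℂ) 0 = 0 := by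
    have key : stmt11_eval 0 ∘L S = 0 := by
      apply stmt11_ext
      intro n
      simp only [ContinuousLinearMap.comp_apply, ContinuousLinearMap.zero_apply,
        stmt11_eval_apply, hS n]
      exact lp.single_apply_ne 2 (n+1) _ (Nat.succ_ne_zero n).symm
    intro x
    have h := ContinuousLinearMap.ext_iff.mp key x
    simpa using h
  -- `S` shifts coordinates
  have hSsucc : ∀ (x : lp (fun _ : ℕ => ℂ) 2) (m : ℕ),
      (S x : ℕ → ℂ) (m+1) = (x : ℕ → ℂ) m := by
    intro x m
    have key : stmt11_eval (m+1) ∘L S = stmt11_eval m := by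
      apply stmt11_ext
      intro n
      simp only [ContinuousLinearMap.comp_apply, stmt11_eval_apply, hS n]
      show (e (n+1) : ℕ → ℂ) (m+1) = (e n : ℕ → ℂ) m
      rw [hcoord, hcoord]
      simp [Nat.succ_inj]
    have h := ContinuousLinearMap.ext_iff.mp key x
    simpa using h
  -- `T` shifts coordinates with weight `lam`
  have hTsucc : ∀ (x : lp (fun _ : ℕ => ℂ) 2) (m : ℕ),
      (T x : ℕ → ℂ) (m+1) = lam m * (x : ℕ → ℂ) m := by
    intro x m
    have key : stmt11_eval (m+1) ∘L T = lam m • stmt11_eval m := by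
      apply stmt11_ext
      intro n
      simp only [ContinuousLinearMap.comp_apply, stmt11_eval_apply, hT n,
        ContinuousLinearMap.smul_apply, smul_eq_mul]
      rw [lp.coeFn_add, lp.coeFn_smul, lp.coeFn_smul]
      simp only [Pi.add_apply, Pi.smul_apply, smul_eq_mul]
      rw [hcoord, hcoord, hcoord]
      by_cases h : m = n
      · subst h; simp
      · simp [h, fun hh => h (Nat.succ_injective hh)]
    have h := ContinuousLinearMap.ext_iff.mp key x
    simpa using h
  -- intertwining relations on the basis
  have hA : ∀ n, S (φ (e n)) = ψ (e (n+1)) := by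
    intro n
    have h := ContinuousLinearMap.ext_iff.mp hSc (e n)
    simp only [ContinuousLinearMap.comp_apply] at h
    rw [hS n] at h
    exact h
  have hB : ∀ n, T (φ (e n)) = w n • ψ (e 0) + lam n • S (φ (e n)) := by
    intro n
    have h := ContinuousLinearMap.ext_iff.mp hTc (e n)
    simp only [ContinuousLinearMap.comp_apply] at h
    rw [hT n, map_add, map_smul, map_smul, ← hA n] at h
    exact h
  -- coordinate form of hB
  have hBc : ∀ n m : ℕ, lam m * (φ (e n) : ℕ → ℂ) m
      = w n * (ψ (e 0) : ℕ → ℂ) (m+1) + lam n * (φ (e n) : ℕ → ℂ) m := by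
    intro n m
    have h := congrArg (fun v : lp (fun _ : ℕ => ℂ) 2 => (v : ℕ → ℂ) (m+1)) (hB n)
    simp only at h
    rw [hTsucc] at h
    rw [lp.coeFn_add, lp.coeFn_smul, lp.coeFn_smul] at h
    simp only [Pi.add_apply, Pi.smul_apply, smul_eq_mul] at h
    rw [hSsucc] at h
    exact h
  have hb : ∀ m, (ψ (e 0) : ℕ → ℂ) (m+1) = 0 := by
    intro m
    have h := hBc m m
    have h2 : w m * (ψ (e 0) : ℕ → ℂ) (m+1) = 0 := by linear_combination -h
    exact (mul_eq_zero.mp h2).resolve_left (hwn m)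
  have hc : ∀ n m : ℕ, m ≠ n → (φ (e n) : ℕ → ℂ) m = 0 := by
    intro n m hmn
    have h := hBc n m
    rw [hb m] at h
    have h2 : (lam m - lam n) * (φ (e n) : ℕ → ℂ) m = 0 := by linear_combination h
    exact (mul_eq_zero.mp h2).resolve_left (sub_ne_zero.mpr (hdist m n hmn))
  -- φ is diagonal
  set aseq : ℕ → ℂ := fun n => (φ (e n) : ℕ → ℂ) n with haseq
  have hphi : ∀ n, φ (e n) = aseq n • e n := by
    intro n
    refine lp.ext (funext fun m => ?_)
    rw [lp.coeFn_smul]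
    simp only [Pi.smul_apply, smul_eq_mul]
    rw [hcoord]
    by_cases h : m = n
    · subst h; simp [haseq]
    · simp [h, hc n m h]
  set a : ℂ := (ψ (e 0) : ℕ → ℂ) 0 with ha
  -- the diagonal entries all equal `a`
  have han : ∀ n, aseq n = a := by
    intro n
    have h := congrArg (fun v : lp (fun _ : ℕ => ℂ) 2 => (v : ℕ → ℂ) 0) (hB n)
    simp only at h
    have hL : (T (φ (e n)) : ℕ → ℂ) 0 = aseq n * w n := by
      rw [hphi n, map_smul, hT n]
      rw [lp.coeFn_smul]
      simp only [Pi.smul_apply, smul_eq_mul]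
      rw [lp.coeFn_add, lp.coeFn_smul, lp.coeFn_smul]
      simp only [Pi.add_apply, Pi.smul_apply, smul_eq_mul]
      rw [hcoord, hcoord]
      simp [Nat.succ_ne_zero]
    rw [hL] at h
    rw [lp.coeFn_add, lp.coeFn_smul, lp.coeFn_smul] at h
    simp only [Pi.add_apply, Pi.smul_apply, smul_eq_mul] at h
    rw [hS0] at h
    -- h : aseq n * w n = w n * a + lam n * 0
    have h2 : w n * aseq n = w n * a := by linear_combination h
    exact mul_left_cancel₀ (hwn n) h2
  have hphi' : ∀ n, φ (e n) = a • e n := by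
    intro n
    rw [hphi n, han n]
  have hpsi0 : ψ (e 0) = a • e 0 := by
    refine lp.ext (funext fun m => ?_)
    rw [lp.coeFn_smul]
    simp only [Pi.smul_apply, smul_eq_mul]
    rw [hcoord]
    cases m with
    | zero => simp [← ha]
    | succ m => simp [hb m, Nat.succ_ne_zero]
  have hpsi : ∀ n, ψ (e n) = a • e n := by
    intro n
    cases n with
    | zero => exact hpsi0
    | succ n =>
      rw [← hA n, hphi' n, map_smul, hS n]
  refine ⟨a, ?_, ?_⟩
  · apply stmt11_ext
    intro n
    rw [ContinuousLinearMap.smul_apply, ContinuousLinearMap.one_apply]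
    exact hphi' n
  · apply stmt11_ext
    intro n
    rw [ContinuousLinearMap.smul_apply, ContinuousLinearMap.one_apply]
    exact hpsi n
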